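/- For every integer n ≥ 9, W(K_{2n}) ≤ 4n - 7; equivalently, K_{2n} has no interval t-coloring with t ≥ 4n - 6. -/

import Mathlib

set_option maxRecDepth 10000

/-- An interval `t`-coloring of the complete graph on `Fin m`:
a proper edge-coloring with colors in `{1,…,t}`, using every color,
such that the spectrum (set of colors incident to each vertex) is an
interval of consecutive integers. -/
def IsIntervalColoring (m t : ℕ) (c : Sym2 (Fin m) → ℕ) : Prop :=
  (∀ u v w : Fin m, u ≠ v → u ≠ w → v ≠ w → c s(u, v) ≠ c s(u, w)) ∧
  (∀ u v : Fin m, u ≠ v → c s(u, v) ∈ Finset.Icc 1 t) ∧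
  (∀ k : ℕ, 1 ≤ k → k ≤ t → ∃ u v : Fin m, u ≠ v ∧ c s(u, v) = k) ∧
  (∀ v : Fin m, ∃ a b : ℕ,
    {k : ℕ | ∃ u : Fin m, u ≠ v ∧ c s(u, v) = k} = Set.Icc a b)

/-- `W m` is the greatest `t` for which the complete graph on `m` vertices
has an interval `t`-coloring. -/
noncomputable def W (m : ℕ) : ℕ :=
  sSup {t : ℕ | ∃ c : Sym2 (Fin m) → ℕ, IsIntervalColoring m t c}


open Finset

variable {N : ℕ}

def Pcnt (a : Fin N → ℕ) (k : ℕ) : ℕ := (Finset.univ.filter fun v => a v ≤ k).card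

section core

variable (col : Sym2 (Fin N) → ℕ) (a : Fin N → ℕ) (D : ℕ)

/-- partner function for color k -/
lemma exists_partner
    (h3 : ∀ (v : Fin N) (k : ℕ), a v ≤ k → k ≤ a v + D → ∃ u, u ≠ v ∧ col s(u, v) = k)
    (k : ℕ) :
    ∃ f : Fin N → Fin N, ∀ v, a v ≤ k → k ≤ a v + D →
      f v ≠ v ∧ col s(f v, v) = k := by
  have hf : ∀ v : Fin N, ∃ u, a v ≤ k → k ≤ a v + D → (u ≠ v ∧ col s(u, v) = k) := by
    intro v
    by_cases h : a v ≤ k ∧ k ≤ a v + D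
    · obtain ⟨u, hu⟩ := h3 v k h.1 h.2
      exact ⟨u, fun _ _ => hu⟩
    · exact ⟨v, fun hh1 hh2 => absurd ⟨hh1, hh2⟩ h⟩
  choose f hf using hf
  exact ⟨f, hf⟩

variable (h1 : ∀ v, 1 ≤ a v)
  (h2 : ∀ u v : Fin N, u ≠ v → a v ≤ col s(u, v) ∧ col s(u, v) ≤ a v + D)
  (h3 : ∀ (v : Fin N) (k : ℕ), a v ≤ k → k ≤ a v + D → ∃ u, u ≠ v ∧ col s(u, v) = k)
  (h4 : ∀ u u' v : Fin N, u ≠ v → u' ≠ v → col s(u, v) = col s(u', v) → u = u')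

include h1 h2 h3 h4 in
lemma core_even (k : ℕ) (hk : k ≤ D + 1) : Pcnt a k % 2 = 0 := by
  obtain ⟨f, hf⟩ := exists_partner col a D h3 k
  have hcond : ∀ v : Fin N, a v ≤ k → (f v ≠ v ∧ col s(f v, v) = k) := by
    intro v hv
    exact hf v hv (by have := h1 v; omega)
  -- a (f v) ≤ k
  have hfa : ∀ v : Fin N, a v ≤ k → a (f v) ≤ k := by
    intro v hv
    obtain ⟨hne, hcol⟩ := hcond v hv
    have := (h2 v (f v) (Ne.symm hne)).1
    rw [Sym2.eq_swap] at hcol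
    omega
  have hinv : ∀ v : Fin N, a v ≤ k → f (f v) = v := by
    intro v hv
    obtain ⟨hne, hcol⟩ := hcond v hv
    obtain ⟨hne2, hcol2⟩ := hcond (f v) (hfa v hv)
    exact h4 (f (f v)) v (f v) hne2 (Ne.symm hne)
      (by rw [hcol2, show s(v, f v) = s(f v, v) from Sym2.eq_swap, hcol])
  classical
  set T : Finset (Fin N) := Finset.univ.filter fun v => a v ≤ k with hT
  have memT : ∀ v : Fin N, v ∈ T ↔ a v ≤ k := by
    intro v; simp [hT]
  have hbij : (T.filter fun v => v < f v).card = (T.filter fun v => f v < v).card := by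
    apply Finset.card_bij (fun v _ => f v)
    · intro v hv
      simp only [Finset.mem_filter] at hv ⊢
      have hvT := (memT v).1 hv.1
      refine ⟨(memT (f v)).2 (hfa v hvT), ?_⟩
      rw [hinv v hvT]; exact hv.2
    · intro v hv v' hv' hee
      simp only [Finset.mem_filter] at hv hv'
      rw [← hinv v ((memT v).1 hv.1), hee, hinv v' ((memT v').1 hv'.1)]
    · intro u hu
      simp only [Finset.mem_filter] at hu
      have huT := (memT u).1 hu.1
      refine ⟨f u, ?_, (hinv u huT)⟩
      simp only [Finset.mem_filter]
      refine ⟨(memT (f u)).2 (hfa u huT), ?_⟩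
      rw [hinv u huT]; exact hu.2
  have hsplit := Finset.card_filter_add_card_filter_not
    (s := T) (p := fun v => v < f v)
  have hcgr : (T.filter fun v => ¬ v < f v) = (T.filter fun v => f v < v) := by
    apply Finset.filter_congr
    intro v hv
    have hvT := (memT v).1 hv
    have hne := (hcond v hvT).1
    constructor
    · intro h; rcases lt_or_gt_of_ne hne with h' | h'
      · exact h'
      · exact absurd h' h
    · intro h h'; exact absurd (lt_trans h' h) (lt_irrefl v)
  rw [hcgr] at hsplit
  have : Pcnt a k = T.card := rfl
  omega

include h2 h3 h4 in
lemma core_lower (u0 : Fin N) (hu0 : a u0 = 1) (k : ℕ) (hk1 : 1 ≤ k) (hk : k ≤ D + 1) :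
    k + 1 ≤ Pcnt a k := by
  have hg : ∀ j : ℕ, ∃ u, j ∈ Finset.Icc 1 k → (u ≠ u0 ∧ col s(u, u0) = j) := by
    intro j
    by_cases hj : j ∈ Finset.Icc 1 k
    · simp only [Finset.mem_Icc] at hj
      obtain ⟨u, hu⟩ := h3 u0 j (by omega) (by omega)
      exact ⟨u, fun _ => hu⟩
    · exact ⟨u0, fun h => absurd h hj⟩
  choose g hg using hg
  set T : Finset (Fin N) := Finset.univ.filter fun v => a v ≤ k with hT
  have hmap : ∀ j ∈ Finset.Icc 1 k, g j ∈ T.erase u0 := by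
    intro j hj
    obtain ⟨hne, hcol⟩ := hg j hj
    simp only [Finset.mem_Icc] at hj
    have h2' := (h2 u0 (g j) (Ne.symm hne)).1
    rw [Sym2.eq_swap] at hcol
    simp only [Finset.mem_erase, hT, Finset.mem_filter, Finset.mem_univ, true_and]
    exact ⟨hne, by omega⟩
  have hinj : Set.InjOn g (Finset.Icc 1 k) := by
    intro j hj j' hj' hee
    have e1 := (hg j (by simpa using hj)).2
    have e2 := (hg j' (by simpa using hj')).2
    rw [← e1, ← e2, hee]
  have hle := Finset.card_le_card_of_injOn g hmap hinj
  have hu0T : u0 ∈ T := by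
    simp only [hT, Finset.mem_filter, Finset.mem_univ, true_and]; omega
  have herase := Finset.card_erase_of_mem hu0T
  have hcardIcc : (Finset.Icc 1 k).card = k := by
    rw [Nat.card_Icc]; omega
  have hTpos : 1 ≤ T.card := Finset.card_pos.2 ⟨u0, hu0T⟩
  have : Pcnt a k = T.card := rfl
  omega

include h2 h4 in
lemma core_upper (w0 : Fin N) (k : ℕ) (hk : k + 1 ≤ a w0) :
    Pcnt a k ≤ k + D + 1 - a w0 := by
  set T : Finset (Fin N) := Finset.univ.filter fun v => a v ≤ k with hT
  have hmap : ∀ v ∈ T, col s(v, w0) ∈ Finset.Icc (a w0) (k + D) := by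
    intro v hv
    simp only [hT, Finset.mem_filter, Finset.mem_univ, true_and] at hv
    have hne : v ≠ w0 := by
      intro h; rw [h] at hv; omega
    have hb1 := (h2 v w0 hne).1
    have hb2 := (h2 w0 v (Ne.symm hne)).2
    rw [Sym2.eq_swap] at hb2
    simp only [Finset.mem_Icc]
    omega
  have hinj : Set.InjOn (fun v => col s(v, w0)) T := by
    intro v hv v' hv' hee
    simp only [hT, Finset.coe_filter, Finset.mem_univ, true_and, Set.mem_setOf_eq] at hv hv'
    have hne : v ≠ w0 := by intro h; rw [h] at hv; omega
    have hne' : v' ≠ w0 := by intro h; rw [h] at hv'; omega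
    exact h4 v v' w0 hne hne' hee
  have hle := Finset.card_le_card_of_injOn _ hmap hinj
  have : Pcnt a k = T.card := rfl
  rw [Nat.card_Icc] at hle
  omega

include h1 h2 h3 h4 in
lemma core_count (p H : ℕ) (hpH : p ≤ H) (hH : H ≤ D + 1) :
    ∑ k ∈ Finset.Icc 1 H, (2 * Pcnt a (min k p) - Pcnt a k) ≤ Pcnt a p * (Pcnt a p - 1) := by
  classical
  set T : Finset (Fin N) := Finset.univ.filter fun v => a v ≤ p with hT
  -- RHS is the number of ordered pairs
  have hRHS : T.offDiag.card = Pcnt a p * (Pcnt a p - 1) := by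
    rw [Finset.offDiag_card]
    have h : Pcnt a p = T.card := rfl
    rw [h]
    cases T.card with
    | zero => rfl
    | succ m => rw [Nat.succ_sub_one, Nat.mul_succ]; omega
  -- step 1 : the color fibers partition a subset of offDiag
  have step1 : ∑ k ∈ Finset.Icc 1 H,
      (T.offDiag.filter fun q => col s(q.1, q.2) = k).card ≤ T.offDiag.card := by
    set S := T.offDiag.filter (fun q => col s(q.1, q.2) ∈ Finset.Icc 1 H) with hS
    have hfib : S.card = ∑ k ∈ Finset.Icc 1 H,
        (S.filter fun q => col s(q.1, q.2) = k).card :=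
      Finset.card_eq_sum_card_fiberwise (fun q hq => (Finset.mem_filter.1 hq).2)
    have heq : ∀ k ∈ Finset.Icc 1 H,
        (S.filter fun q => col s(q.1, q.2) = k)
          = (T.offDiag.filter fun q => col s(q.1, q.2) = k) := by
      intro k hk
      rw [hS, Finset.filter_filter]
      apply Finset.filter_congr
      intro q _
      constructor
      · intro h; exact h.2
      · intro h; exact ⟨by rw [h]; exact hk, h⟩
    calc ∑ k ∈ Finset.Icc 1 H, (T.offDiag.filter fun q => col s(q.1, q.2) = k).card
        = ∑ k ∈ Finset.Icc 1 H, (S.filter fun q => col s(q.1, q.2) = k).card := by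
          apply Finset.sum_congr rfl; intro k hk; rw [heq k hk]
      _ = S.card := hfib.symm
      _ ≤ T.offDiag.card := Finset.card_filter_le _ _
  -- step 2 : per-color lower bound
  have step2 : ∀ k ∈ Finset.Icc 1 H, 2 * Pcnt a (min k p) - Pcnt a k ≤
      (T.offDiag.filter fun q => col s(q.1, q.2) = k).card := by
    intro k hk
    simp only [Finset.mem_Icc] at hk
    obtain ⟨f, hf⟩ := exists_partner col a D h3 k
    have hcond : ∀ v : Fin N, a v ≤ k → (f v ≠ v ∧ col s(f v, v) = k) := by
      intro v hv
      exact hf v hv (by have := h1 v; omega)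
    have hfa : ∀ v : Fin N, a v ≤ k → a (f v) ≤ k := by
      intro v hv
      obtain ⟨hne, hcol⟩ := hcond v hv
      have := (h2 v (f v) (Ne.symm hne)).1
      rw [Sym2.eq_swap] at hcol
      omega
    set K := min k p with hK
    set TK : Finset (Fin N) := Finset.univ.filter fun v => a v ≤ K with hTK
    set Tk : Finset (Fin N) := Finset.univ.filter fun v => a v ≤ k with hTk
    have hsplit := Finset.card_filter_add_card_filter_not
      (s := TK) (p := fun v => a (f v) ≤ p)
    have hbad : (TK.filter fun v => ¬ a (f v) ≤ p).card ≤ (Tk \ T).card := by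
      apply Finset.card_le_card_of_injOn f
      · intro v hv
        simp only [Finset.mem_coe, Finset.mem_filter, hTK, Finset.mem_univ, true_and] at hv
        obtain ⟨hva, hvp⟩ := hv
        simp only [Finset.mem_coe, Finset.mem_sdiff, hTk, hT, Finset.mem_filter, Finset.mem_univ, true_and]
        exact ⟨hfa v (by omega), hvp⟩
      · intro v hv v' hv' hee
        simp only [Finset.coe_filter, Set.mem_setOf_eq, hTK, Finset.mem_univ,
          Finset.mem_filter, true_and] at hv hv'
        have hak : a v ≤ k := by have := hv.1; omega
        have hak' : a v' ≤ k := by have := hv'.1; omega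
        have e1 := (hcond v hak).2
        have e2 := (hcond v' hak').2
        have n1 := (hcond v hak).1
        have n2 := (hcond v' hak').1
        rw [Sym2.eq_swap] at e1 e2
        refine h4 v v' (f v) (Ne.symm n1) ?_ ?_
        · rw [hee]; exact Ne.symm n2
        · rw [e1, hee, e2]
    have hTkT : (Tk \ T).card + TK.card = Tk.card := by
      have hint : Tk ∩ T = TK := by
        ext v
        simp only [Finset.mem_inter, hTk, hT, hTK, Finset.mem_filter, Finset.mem_univ,
          true_and, hK, le_min_iff]
      have hh := Finset.card_inter_add_card_sdiff Tk T
      rw [hint] at hh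
      omega
    have hgood : (TK.filter fun v => a (f v) ≤ p).card ≤
        (T.offDiag.filter fun q => col s(q.1, q.2) = k).card := by
      apply Finset.card_le_card_of_injOn (fun v => (v, f v))
      · intro v hv
        simp only [Finset.mem_coe, Finset.mem_filter, hTK, Finset.mem_univ, true_and] at hv
        obtain ⟨hva, hvp⟩ := hv
        have hak : a v ≤ k := by omega
        have hcol := (hcond v hak).2
        have hne := (hcond v hak).1
        rw [Sym2.eq_swap] at hcol
        simp only [Finset.mem_coe, Finset.mem_filter, Finset.mem_offDiag, hT, Finset.mem_univ, true_and]
        exact ⟨⟨by omega, hvp, fun h => hne h.symm⟩, hcol⟩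
      · intro v _ v' _ hee
        exact congrArg Prod.fst hee
    have hKk : TK.card ≤ Tk.card := by
      apply Finset.card_le_card
      intro v hv
      simp only [hTK, hTk, Finset.mem_filter, Finset.mem_univ, true_and] at hv ⊢
      omega
    have e1 : Pcnt a K = TK.card := rfl
    have e2 : Pcnt a k = Tk.card := rfl
    omega
  calc ∑ k ∈ Finset.Icc 1 H, (2 * Pcnt a (min k p) - Pcnt a k)
      ≤ ∑ k ∈ Finset.Icc 1 H, (T.offDiag.filter fun q => col s(q.1, q.2) = k).card :=
        Finset.sum_le_sum step2
    _ ≤ T.offDiag.card := step1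
    _ = Pcnt a p * (Pcnt a p - 1) := hRHS
end core

/-- The data of spectrum-start positions extracted from an interval coloring. -/
def Pack (n t : ℕ) (col : Sym2 (Fin (2*n)) → ℕ) (a : Fin (2*n) → ℕ) : Prop :=
  (∀ v, 1 ≤ a v) ∧
  (∀ v, a v + (2*n-2) ≤ t) ∧
  (∀ u v, u ≠ v → a v ≤ col s(u,v) ∧ col s(u,v) ≤ a v + (2*n-2)) ∧
  (∀ v k, a v ≤ k → k ≤ a v + (2*n-2) → ∃ u, u ≠ v ∧ col s(u,v) = k) ∧
  (∀ u u' v, u ≠ v → u' ≠ v → col s(u,v) = col s(u',v) → u = u') ∧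
  (∃ u0, a u0 = 1) ∧ (∃ w0, a w0 + (2*n-2) = t)

lemma extract (n t : ℕ) (hn : 1 ≤ n) (ht : 1 ≤ t) (col : Sym2 (Fin (2*n)) → ℕ)
    (h : IsIntervalColoring (2*n) t col) : ∃ a, Pack n t col a := by
  obtain ⟨hprop, hmem, husage, hspec⟩ := h
  choose aa bb hab using hspec
  have hcard2 : 1 < Fintype.card (Fin (2*n)) := by simp; omega
  have h4 : ∀ u u' v : Fin (2*n), u ≠ v → u' ≠ v → col s(u,v) = col s(u',v) → u = u' := by
    intro u u' v hu hu' he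
    by_contra hne
    have hh := hprop v u u' (Ne.symm hu) (Ne.symm hu') hne
    rw [show s(v,u) = s(u,v) from Sym2.eq_swap,
        show s(v,u') = s(u',v) from Sym2.eq_swap] at hh
    exact hh he
  -- spectrum membership helper
  have hmem_spec : ∀ u v : Fin (2*n), u ≠ v → col s(u,v) ∈ Set.Icc (aa v) (bb v) := by
    intro u v huv
    rw [← hab v]
    exact ⟨u, huv, rfl⟩
  have hne_ex : ∀ v : Fin (2*n), ∃ u, u ≠ v := by
    intro v
    exact Fintype.exists_ne_of_one_lt_card hcard2 v
  have haabb : ∀ v, aa v ≤ bb v := by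
    intro v
    obtain ⟨u, hu⟩ := hne_ex v
    have := hmem_spec u v hu
    exact le_trans this.1 this.2
  have haa1 : ∀ v, 1 ≤ aa v ∧ bb v ≤ t := by
    intro v
    have h1 : aa v ∈ Set.Icc (aa v) (bb v) := ⟨le_refl _, haabb v⟩
    have h2 : bb v ∈ Set.Icc (aa v) (bb v) := ⟨haabb v, le_refl _⟩
    rw [← hab v] at h1 h2
    obtain ⟨u1, hu1, hc1⟩ := h1
    obtain ⟨u2, hu2, hc2⟩ := h2
    have m1 := hmem u1 v hu1
    have m2 := hmem u2 v hu2
    simp only [Finset.mem_Icc] at m1 m2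
    omega
  -- spectrum cardinality
  have hbb : ∀ v, bb v = aa v + (2*n-2) := by
    intro v
    have hS : ((Finset.univ.erase v).image (fun u => col s(u,v)) : Set ℕ)
        = Set.Icc (aa v) (bb v) := by
      rw [← hab v]
      ext k
      simp only [Finset.coe_image, Set.mem_image, Finset.mem_coe, Finset.mem_erase,
        Finset.mem_univ, and_true, Set.mem_setOf_eq]
    rw [← Finset.coe_Icc] at hS
    have hSeq := Finset.coe_injective hS
    have hinj : Set.InjOn (fun u => col s(u,v)) (Finset.univ.erase v) := by
      intro u hu u' hu' hee
      simp only [Finset.coe_erase, Set.mem_diff, Finset.mem_coe, Finset.mem_univ,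
        Set.mem_singleton_iff] at hu hu'
      exact h4 u u' v hu.2 hu'.2 hee
    have hcardim := Finset.card_image_of_injOn hinj
    rw [hSeq] at hcardim
    rw [Finset.card_erase_of_mem (Finset.mem_univ v), Finset.card_univ, Fintype.card_fin,
      Nat.card_Icc] at hcardim
    have := haabb v
    have := (haa1 v).1
    omega
  refine ⟨aa, fun v => (haa1 v).1, ?_, ?_, ?_, h4, ?_, ?_⟩
  · intro v; have := (haa1 v).2; rw [hbb v] at this; exact this
  · intro u v huv
    have := hmem_spec u v huv
    rw [hbb v] at this
    exact this
  · intro v k hk1 hk2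
    have : k ∈ Set.Icc (aa v) (bb v) := by rw [hbb v]; exact ⟨hk1, hk2⟩
    rw [← hab v] at this
    exact this
  · obtain ⟨u, v, huv, hcol⟩ := husage 1 (le_refl 1) ht
    have := (hmem_spec u v huv).1
    rw [hcol] at this
    exact ⟨v, by have := (haa1 v).1; omega⟩
  · obtain ⟨u, v, huv, hcol⟩ := husage t ht (le_refl t)
    have h1 := (hmem_spec u v huv).2
    rw [hcol, hbb v] at h1
    have h2 := (haa1 v).2
    rw [hbb v] at h2
    exact ⟨v, by omega⟩

/-- the mirrored coloring also yields a pack -/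
lemma mirror_pack (n t : ℕ) (col : Sym2 (Fin (2*n)) → ℕ) (a : Fin (2*n) → ℕ)
    (hp : Pack n t col a) :
    Pack n t (fun e => t + 1 - col e) (fun v => t + 1 - (a v + (2*n-2))) := by
  obtain ⟨h1, hbt, h2, h3, h4, ⟨u0, hu0⟩, ⟨w0, hw0⟩⟩ := hp
  refine ⟨?_, ?_, ?_, ?_, ?_, ⟨w0, ?_⟩, ⟨u0, ?_⟩⟩
  · intro v; dsimp only; have := hbt v; omega
  · intro v; dsimp only; have := h1 v; have := hbt v; omega
  · intro u v huv
    dsimp only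
    have hb := h2 u v huv
    have := h1 v; have := hbt v
    constructor <;> omega
  · intro v k hk1 hk2
    dsimp only at hk1 hk2 ⊢
    have hv1 := h1 v; have hv2 := hbt v
    obtain ⟨u, hu, hcol⟩ := h3 v (t + 1 - k) (by omega) (by omega)
    exact ⟨u, hu, by rw [hcol]; omega⟩
  · intro u u' v hu hu' he
    dsimp only at he
    have b1 := (h2 u v hu); have b2 := (h2 u' v hu')
    have := h1 v; have := hbt v
    exact h4 u u' v hu hu' (by omega)
  · dsimp only; have := hbt w0; omega
  · dsimp only; have := h1 u0; have := hbt u0; omega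


def fPgen (nb : ℕ) (b : Fin nb → Bool) (k : ℕ) : ℕ :=
  if h : k % 2 = 1 ∧ (k-1)/2 < nb then
    (if b ⟨(k-1)/2, h.2⟩ then k+3 else k+1)
  else k+2

lemma dec18 : ∀ b : Fin 9 → Bool, ∃ p ∈ Finset.Icc 1 18,
    fPgen 9 b p * (fPgen 9 b p - 1) <
      ∑ c ∈ Finset.Icc 1 18, (2 * fPgen 9 b (min c p) - fPgen 9 b c) := by
  decide

lemma dec9 : ∀ b : Fin 7 → Bool, ∃ p ∈ Finset.Icc 1 13,
    (fPgen 7 b p * (fPgen 7 b p - 1) <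
      ∑ c ∈ Finset.Icc 1 13, (2 * fPgen 7 b (min c p) - fPgen 7 b c)) ∨
    ((18 - fPgen 7 b (14 - p)) * ((18 - fPgen 7 b (14 - p)) - 1) <
      ∑ c ∈ Finset.Icc 1 13, (2 * (18 - fPgen 7 b (14 - min c p)) - (18 - fPgen 7 b (14 - c)))) := by
  decide

lemma dec10 : ∀ b : Fin 8 → Bool, ∃ p ∈ Finset.Icc 1 15,
    (fPgen 8 b p * (fPgen 8 b p - 1) <
      ∑ c ∈ Finset.Icc 1 15, (2 * fPgen 8 b (min c p) - fPgen 8 b c)) ∨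
    ((20 - fPgen 8 b (16 - p)) * ((20 - fPgen 8 b (16 - p)) - 1) <
      ∑ c ∈ Finset.Icc 1 15, (2 * (20 - fPgen 8 b (16 - min c p)) - (20 - fPgen 8 b (16 - c)))) := by
  decide

lemma dec11 : ∀ b : Fin 9 → Bool, ∃ p ∈ Finset.Icc 1 17,
    (fPgen 9 b p * (fPgen 9 b p - 1) <
      ∑ c ∈ Finset.Icc 1 17, (2 * fPgen 9 b (min c p) - fPgen 9 b c)) ∨
    ((22 - fPgen 9 b (18 - p)) * ((22 - fPgen 9 b (18 - p)) - 1) <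
      ∑ c ∈ Finset.Icc 1 17, (2 * (22 - fPgen 9 b (18 - min c p)) - (22 - fPgen 9 b (18 - c)))) := by
  decide

lemma sum_Icc_five (f : ℕ → ℕ) : ∑ k ∈ Finset.Icc 1 5, f k = f 1 + f 2 + f 3 + f 4 + f 5 := by
  rw [show (5:ℕ) = 4+1 from rfl, Finset.sum_Icc_succ_top (by omega)]
  rw [show (4:ℕ) = 3+1 from rfl, Finset.sum_Icc_succ_top (by omega)]
  rw [show (3:ℕ) = 2+1 from rfl, Finset.sum_Icc_succ_top (by omega)]
  rw [show (2:ℕ) = 1+1 from rfl, Finset.sum_Icc_succ_top (by omega)]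
  rw [Finset.Icc_self, Finset.sum_singleton]

lemma match_bits (P : ℕ → ℕ) (nb K : ℕ) (hK : K ≤ 2*nb)
    (hb : ∀ k, 1 ≤ k → k ≤ K → (P k % 2 = 0 ∧ k + 1 ≤ P k ∧ P k ≤ k + 3)) :
    ∀ k, 1 ≤ k → k ≤ K →
      P k = fPgen nb (fun i => decide (P (2*i.val+1) = 2*i.val+4)) k := by
  intro k hk1 hkK
  obtain ⟨hpar, hlo, hhi⟩ := hb k hk1 hkK
  rcases Nat.even_or_odd k with he | ho
  · obtain ⟨m, hm⟩ := he
    rw [fPgen, dif_neg (by omega)]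
    omega
  · obtain ⟨m, hm⟩ := ho
    have hcond : k % 2 = 1 ∧ (k-1)/2 < nb := by omega
    rw [fPgen, dif_pos hcond]
    show P k = if decide (P (2*((k-1)/2)+1) = 2*((k-1)/2)+4) then k+3 else k+1
    rw [show 2*((k-1)/2)+1 = k from by omega]
    split
    next hbit =>
      have := of_decide_eq_true hbit
      omega
    next hbit =>
      have : ¬ (P k = 2 * ((k-1)/2) + 4) := by simpa using hbit
      omega

section endgame

variable (n t A : ℕ) (P Q : ℕ → ℕ)

lemma endgame (hn : 9 ≤ n) (ht : 4*n - 6 ≤ t) (hA : A + (2*n-2) = t)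
    (hPe : ∀ k, k ≤ 2*n-1 → P k % 2 = 0)
    (hPl : ∀ k, 1 ≤ k → k ≤ 2*n-1 → k + 1 ≤ P k)
    (hPu : ∀ k, k + 1 ≤ A → P k ≤ k + (2*n-2) + 1 - A)
    (hPc : ∀ p H, p ≤ H → H ≤ 2*n-1 →
      ∑ k ∈ Finset.Icc 1 H, (2 * P (min k p) - P k) ≤ P p * (P p - 1))
    (hQe : ∀ k, k ≤ 2*n-1 → Q k % 2 = 0)
    (hQl : ∀ k, 1 ≤ k → k ≤ 2*n-1 → k + 1 ≤ Q k)
    (hQu : ∀ k, k + 1 ≤ A → Q k ≤ k + (2*n-2) + 1 - A)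
    (hQc : ∀ p H, p ≤ H → H ≤ 2*n-1 →
      ∑ k ∈ Finset.Icc 1 H, (2 * Q (min k p) - Q k) ≤ Q p * (Q p - 1))
    (hlink : ∀ k, 1 ≤ k → k + 1 ≤ A → P (A - k) + Q k = 2*n) : False := by
  have hcases : A = 2*n-4 ∨ A = 2*n-3 ∨ 2*n-2 ≤ A := by omega
  rcases hcases with hA4 | hA3 | hA2
  · -- A = 2n-4, i.e. t = 4n-6
    by_cases h12 : 12 ≤ n
    · have hb : ∀ k, 1 ≤ k → k ≤ 18 → (P k % 2 = 0 ∧ k + 1 ≤ P k ∧ P k ≤ k + 3) := by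
        intro k hk1 hk2
        refine ⟨hPe k (by omega), hPl k hk1 (by omega), ?_⟩
        have := hPu k (by omega)
        omega
      have hm := match_bits P 9 18 (by omega) hb
      obtain ⟨p, hp, hkill⟩ := dec18 (fun i => decide (P (2*i.val+1) = 2*i.val+4))
      simp only [Finset.mem_Icc] at hp
      have hsum : ∑ k ∈ Finset.Icc 1 18,
            (2 * fPgen 9 (fun i => decide (P (2*i.val+1) = 2*i.val+4)) (min k p)
              - fPgen 9 (fun i => decide (P (2*i.val+1) = 2*i.val+4)) k)
          = ∑ k ∈ Finset.Icc 1 18, (2 * P (min k p) - P k) := by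
        apply Finset.sum_congr rfl
        intro k hk
        simp only [Finset.mem_Icc] at hk
        rw [← hm k hk.1 hk.2, ← hm (min k p) (by omega) (by omega)]
      rw [hsum, ← hm p hp.1 hp.2] at hkill
      have := hPc p 18 hp.2 (by omega)
      omega
    · -- n ∈ {9, 10, 11}
      rcases (by omega : n = 9 ∨ n = 10 ∨ n = 11) with h9 | h10 | h11
      · subst h9
        have hA' : A = 14 := by omega
        subst hA'
        have hb : ∀ k, 1 ≤ k → k ≤ 13 → (P k % 2 = 0 ∧ k + 1 ≤ P k ∧ P k ≤ k + 3) := by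
          intro k hk1 hk2
          refine ⟨hPe k (by omega), hPl k hk1 (by omega), ?_⟩
          have := hPu k (by omega); omega
        have hm := match_bits P 7 13 (by omega) hb
        set b : Fin 7 → Bool := fun i => decide (P (2*i.val+1) = 2*i.val+4) with hbdef
        have hmQ : ∀ k, 1 ≤ k → k ≤ 13 → Q k = 18 - fPgen 7 b (14 - k) := by
          intro k hk1 hk2
          have hl := hlink k (by omega) (by omega)
          rw [hm (14 - k) (by omega) (by omega)] at hl
          omega
        obtain ⟨p, hp, hkill⟩ := dec9 b
        simp only [Finset.mem_Icc] at hp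
        rcases hkill with hk | hk
        · have hsum : (∑ k ∈ Finset.Icc 1 13, (2 * fPgen 7 b (min k p) - fPgen 7 b k))
              = ∑ k ∈ Finset.Icc 1 13, (2 * P (min k p) - P k) :=
            Finset.sum_congr rfl (fun k hkk => by
              simp only [Finset.mem_Icc] at hkk
              rw [← hm k hkk.1 hkk.2, ← hm (min k p) (by omega) (by omega)])
          rw [hsum, ← hm p hp.1 hp.2] at hk
          have := hPc p 13 hp.2 (by omega)
          omega
        · have hsum : (∑ k ∈ Finset.Icc 1 13,
                (2 * (18 - fPgen 7 b (14 - min k p)) - (18 - fPgen 7 b (14 - k))))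
              = ∑ k ∈ Finset.Icc 1 13, (2 * Q (min k p) - Q k) :=
            Finset.sum_congr rfl (fun k hkk => by
              simp only [Finset.mem_Icc] at hkk
              rw [← hmQ k hkk.1 hkk.2, ← hmQ (min k p) (by omega) (by omega)])
          rw [hsum, ← hmQ p hp.1 hp.2] at hk
          have := hQc p 13 hp.2 (by omega)
          omega
      · subst h10
        have hA' : A = 16 := by omega
        subst hA'
        have hb : ∀ k, 1 ≤ k → k ≤ 15 → (P k % 2 = 0 ∧ k + 1 ≤ P k ∧ P k ≤ k + 3) := by
          intro k hk1 hk2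
          refine ⟨hPe k (by omega), hPl k hk1 (by omega), ?_⟩
          have := hPu k (by omega); omega
        have hm := match_bits P 8 15 (by omega) hb
        set b : Fin 8 → Bool := fun i => decide (P (2*i.val+1) = 2*i.val+4) with hbdef
        have hmQ : ∀ k, 1 ≤ k → k ≤ 15 → Q k = 20 - fPgen 8 b (16 - k) := by
          intro k hk1 hk2
          have hl := hlink k (by omega) (by omega)
          rw [hm (16 - k) (by omega) (by omega)] at hl
          omega
        obtain ⟨p, hp, hkill⟩ := dec10 b
        simp only [Finset.mem_Icc] at hp
        rcases hkill with hk | hk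
        · have hsum : (∑ k ∈ Finset.Icc 1 15, (2 * fPgen 8 b (min k p) - fPgen 8 b k))
              = ∑ k ∈ Finset.Icc 1 15, (2 * P (min k p) - P k) :=
            Finset.sum_congr rfl (fun k hkk => by
              simp only [Finset.mem_Icc] at hkk
              rw [← hm k hkk.1 hkk.2, ← hm (min k p) (by omega) (by omega)])
          rw [hsum, ← hm p hp.1 hp.2] at hk
          have := hPc p 15 hp.2 (by omega)
          omega
        · have hsum : (∑ k ∈ Finset.Icc 1 15,
                (2 * (20 - fPgen 8 b (16 - min k p)) - (20 - fPgen 8 b (16 - k))))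
              = ∑ k ∈ Finset.Icc 1 15, (2 * Q (min k p) - Q k) :=
            Finset.sum_congr rfl (fun k hkk => by
              simp only [Finset.mem_Icc] at hkk
              rw [← hmQ k hkk.1 hkk.2, ← hmQ (min k p) (by omega) (by omega)])
          rw [hsum, ← hmQ p hp.1 hp.2] at hk
          have := hQc p 15 hp.2 (by omega)
          omega
      · subst h11
        have hA' : A = 18 := by omega
        subst hA'
        have hb : ∀ k, 1 ≤ k → k ≤ 17 → (P k % 2 = 0 ∧ k + 1 ≤ P k ∧ P k ≤ k + 3) := by
          intro k hk1 hk2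
          refine ⟨hPe k (by omega), hPl k hk1 (by omega), ?_⟩
          have := hPu k (by omega); omega
        have hm := match_bits P 9 17 (by omega) hb
        set b : Fin 9 → Bool := fun i => decide (P (2*i.val+1) = 2*i.val+4) with hbdef
        have hmQ : ∀ k, 1 ≤ k → k ≤ 17 → Q k = 22 - fPgen 9 b (18 - k) := by
          intro k hk1 hk2
          have hl := hlink k (by omega) (by omega)
          rw [hm (18 - k) (by omega) (by omega)] at hl
          omega
        obtain ⟨p, hp, hkill⟩ := dec11 b
        simp only [Finset.mem_Icc] at hp
        rcases hkill with hk | hk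
        · have hsum : (∑ k ∈ Finset.Icc 1 17, (2 * fPgen 9 b (min k p) - fPgen 9 b k))
              = ∑ k ∈ Finset.Icc 1 17, (2 * P (min k p) - P k) :=
            Finset.sum_congr rfl (fun k hkk => by
              simp only [Finset.mem_Icc] at hkk
              rw [← hm k hkk.1 hkk.2, ← hm (min k p) (by omega) (by omega)])
          rw [hsum, ← hm p hp.1 hp.2] at hk
          have := hPc p 17 hp.2 (by omega)
          omega
        · have hsum : (∑ k ∈ Finset.Icc 1 17,
                (2 * (22 - fPgen 9 b (18 - min k p)) - (22 - fPgen 9 b (18 - k))))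
              = ∑ k ∈ Finset.Icc 1 17, (2 * Q (min k p) - Q k) :=
            Finset.sum_congr rfl (fun k hkk => by
              simp only [Finset.mem_Icc] at hkk
              rw [← hmQ k hkk.1 hkk.2, ← hmQ (min k p) (by omega) (by omega)])
          rw [hsum, ← hmQ p hp.1 hp.2] at hk
          have := hQc p 17 hp.2 (by omega)
          omega
  · -- A = 2n-3, i.e. t = 4n-5
    have e1 : P 1 = 2 := by
      have := hPe 1 (by omega); have := hPl 1 (by omega) (by omega)
      have := hPu 1 (by omega); omega
    have e2 : P 2 = 4 := by
      have := hPe 2 (by omega); have := hPl 2 (by omega) (by omega)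
      have := hPu 2 (by omega); omega
    have e3 : P 3 = 4 := by
      have := hPe 3 (by omega); have := hPl 3 (by omega) (by omega)
      have := hPu 3 (by omega); omega
    have e4 : P 4 = 6 := by
      have := hPe 4 (by omega); have := hPl 4 (by omega) (by omega)
      have := hPu 4 (by omega); omega
    have e5 : P 5 = 6 := by
      have := hPe 5 (by omega); have := hPl 5 (by omega) (by omega)
      have := hPu 5 (by omega); omega
    have hc := hPc 2 5 (by omega) (by omega)
    rw [sum_Icc_five, e2] at hc
    norm_num at hc
    omega
  · -- t ≥ 4n-4
    have := hPe 2 (by omega)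
    have := hPl 2 (by omega) (by omega)
    have := hPu 2 (by omega)
    omega

end endgame

theorem noColoring (n t : ℕ) (hn : 9 ≤ n) (ht : 4*n - 6 ≤ t)
    (col : Sym2 (Fin (2*n)) → ℕ) (h : IsIntervalColoring (2*n) t col) : False := by
  obtain ⟨a, hp⟩ := extract n t (by omega) (by omega) col h
  have hp' := mirror_pack n t col a hp
  set col' : Sym2 (Fin (2*n)) → ℕ := fun e => t + 1 - col e with hcol'def
  set a' : Fin (2*n) → ℕ := fun v => t + 1 - (a v + (2*n-2)) with ha'def
  obtain ⟨h1, hbt, h2, h3, h4, ⟨u0, hu0⟩, ⟨w0, hw0⟩⟩ := hp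
  obtain ⟨h1', hbt', h2', h3', h4', ⟨u0', hu0'⟩, ⟨w0', hw0'⟩⟩ := hp'
  have heqA : a' w0' = a w0 := by
    have e1 : a' w0' + (2*n-2) = t := hw0'
    omega
  refine endgame n t (a w0) (Pcnt a) (Pcnt a') hn ht hw0 ?_ ?_ ?_ ?_ ?_ ?_ ?_ ?_ ?_
  · intro k hk
    exact core_even col a (2*n-2) h1 h2 h3 h4 k (by omega)
  · intro k hk1 hk2
    exact core_lower col a (2*n-2) h2 h3 h4 u0 hu0 k hk1 (by omega)
  · intro k hk
    exact core_upper col a (2*n-2) h2 h4 w0 k hk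
  · intro p H hpH hH
    exact core_count col a (2*n-2) h1 h2 h3 h4 p H hpH (by omega)
  · intro k hk
    exact core_even col' a' (2*n-2) h1' h2' h3' h4' k (by omega)
  · intro k hk1 hk2
    exact core_lower col' a' (2*n-2) h2' h3' h4' u0' hu0' k hk1 (by omega)
  · intro k hk
    have hres := core_upper col' a' (2*n-2) h2' h4' w0' k (by omega)
    rw [heqA] at hres
    exact hres
  · intro p H hpH hH
    exact core_count col' a' (2*n-2) h1' h2' h3' h4' p H hpH (by omega)
  · intro k hk1 hk2
    have hsplit := Finset.card_filter_add_card_filter_not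
      (s := (Finset.univ : Finset (Fin (2*n)))) (p := fun v => a v ≤ a w0 - k)
    have hcgr : (Finset.univ.filter fun v => ¬ a v ≤ a w0 - k)
        = (Finset.univ.filter fun v => a' v ≤ k) := by
      apply Finset.filter_congr
      intro v _
      have hv1 := h1 v
      have hv2 := hbt v
      have hav : a' v = t + 1 - (a v + (2*n-2)) := by rw [ha'def]
      constructor
      · intro hh; omega
      · intro hh; omega
    rw [hcgr, Finset.card_univ, Fintype.card_fin] at hsplit
    exact hsplit

theorem statement_9 (n : ℕ) (hn : 9 ≤ n) :
    W (2 * n) ≤ 4 * n - 7 ∧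
    ∀ t : ℕ, 4 * n - 6 ≤ t →
      ∀ c : Sym2 (Fin (2 * n)) → ℕ, ¬ IsIntervalColoring (2 * n) t c := by
  constructor
  · refine csSup_le' ?_
    intro t' ht'
    obtain ⟨c, hc⟩ := ht'
    by_contra hgt
    push_neg at hgt
    exact noColoring n t' hn (by omega) c hc
  · intro t ht c hc
    exact noColoring n t hn ht c hc
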